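/- Hölder-type loss transfer via Rényi divergence: let P and Q be probability distributions on a finite set X × Y with Q strictly positive, let f : X × Y → [0, M] be any function with values bounded by M > 0, and let α > 1. Then E_{(x,y)∼P}[f(x, y)] ≤ [ d_α(P ‖ Q) · E_{(x,y)∼Q}[f(x, y)] ]^((α−1)/α) · M^(1/α). -/

import Mathlib

open scoped BigOperators

/-- Exponential Rényi divergence `d_α(P ‖ Q)` between functions on a finite set. -/
noncomputable def expRenyi {Z : Type*} [Fintype Z] (α : ℝ) (P Q : Z → ℝ) : ℝ :=
  (∑ z, P z ^ α / Q z ^ (α - 1)) ^ (1 / (α - 1))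

/-- Hölder-type loss transfer via Rényi divergence: for probability distributions
`P, Q` on a finite set `X × Y` with `Q` strictly positive, a function `f` with
values in `[0, M]`, and `α > 1`,
`E_P[f] ≤ (d_α(P ‖ Q) · E_Q[f])^((α−1)/α) · M^(1/α)`. -/
theorem holder_loss_transfer {X Y : Type*} [Fintype X] [Fintype Y]
    (P Q : X × Y → ℝ)
    (hP : ∀ v, 0 ≤ P v) (hPsum : ∑ v, P v = 1)
    (hQpos : ∀ v, 0 < Q v) (hQsum : ∑ v, Q v = 1)
    (f : X × Y → ℝ) (M : ℝ) (hM : 0 < M)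
    (hf0 : ∀ v, 0 ≤ f v) (hfM : ∀ v, f v ≤ M)
    (α : ℝ) (hα : 1 < α) :
    ∑ v, P v * f v ≤
      (expRenyi α P Q * ∑ v, Q v * f v) ^ ((α - 1) / α) * M ^ (1 / α) := by
  have hα0 : (0:ℝ) < α := lt_trans one_pos hα
  have hα1 : (0:ℝ) < α - 1 := by linarith
  set q : ℝ := α / (α - 1) with hq
  have hq0 : (0:ℝ) < q := div_pos hα0 hα1
  have hpq : Real.HolderConjugate α q := Real.HolderConjugate.conjExponent hα
  have h1q : 1 / q = (α - 1) / α := by rw [hq, one_div_div]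
  have hqm1 : q - 1 = 1 / (α - 1) := by
    rw [hq]; field_simp; ring
  set F : X × Y → ℝ := fun v => P v / Q v ^ ((α - 1) / α) with hF
  set G : X × Y → ℝ := fun v => Q v ^ ((α - 1) / α) * f v with hG
  have hFnn : ∀ v, 0 ≤ F v := fun v =>
    div_nonneg (hP v) (Real.rpow_nonneg (hQpos v).le _)
  have hGnn : ∀ v, 0 ≤ G v := fun v =>
    mul_nonneg (Real.rpow_nonneg (hQpos v).le _) (hf0 v)
  have hFG : ∀ v, P v * f v = F v * G v := by
    intro v
    have hQ : Q v ^ ((α - 1) / α) ≠ 0 := (Real.rpow_pos_of_pos (hQpos v) _).ne'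
    simp only [hF, hG]
    field_simp
  -- Hölder
  have holder :
      ∑ v, F v * G v ≤
        (∑ v, F v ^ α) ^ (1 / α) * (∑ v, G v ^ q) ^ (1 / q) :=
    Real.inner_le_Lp_mul_Lq_of_nonneg _ hpq (fun v _ => hFnn v) (fun v _ => hGnn v)
  -- identify the F-sum
  have hFsum : ∑ v, F v ^ α = ∑ v, P v ^ α / Q v ^ (α - 1) := by
    refine Finset.sum_congr rfl fun v _ => ?_
    rw [hF]
    simp only
    rw [Real.div_rpow (hP v) (Real.rpow_nonneg (hQpos v).le _),
      ← Real.rpow_mul (hQpos v).le]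
    congr 2
    field_simp
  set S : ℝ := ∑ v, P v ^ α / Q v ^ (α - 1) with hS
  have hSnn : 0 ≤ S :=
    Finset.sum_nonneg fun v _ =>
      div_nonneg (Real.rpow_nonneg (hP v) _) (Real.rpow_nonneg (hQpos v).le _)
  set T : ℝ := ∑ v, Q v * f v with hT
  have hTnn : 0 ≤ T :=
    Finset.sum_nonneg fun v _ => mul_nonneg (hQpos v).le (hf0 v)
  -- bound the G-sum
  have hGsum : ∑ v, G v ^ q ≤ M ^ (1 / (α - 1)) * T := by
    rw [hT, Finset.mul_sum]
    refine Finset.sum_le_sum fun v _ => ?_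
    have hQexp : Q v ^ ((α - 1) / α * q) = Q v := by
      have : (α - 1) / α * q = 1 := by rw [hq]; field_simp
      rw [this, Real.rpow_one]
    have hfq : f v ^ q ≤ f v * M ^ (1 / (α - 1)) := by
      rcases eq_or_lt_of_le (hf0 v) with h0 | h0
      · rw [← h0, Real.zero_rpow hq0.ne', zero_mul]
      · have : f v ^ q = f v * f v ^ (q - 1) := by
          rw [← Real.rpow_one_add' h0.le (by linarith : (1:ℝ) + (q - 1) ≠ 0)]
          ring_nf
        rw [this]
        refine mul_le_mul_of_nonneg_left ?_ (hf0 v)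
        rw [← hqm1]
        exact Real.rpow_le_rpow (hf0 v) (hfM v) (by linarith [hpq.symm.lt])
    calc G v ^ q = Q v * f v ^ q := by
          rw [hG]
          simp only
          rw [Real.mul_rpow (Real.rpow_nonneg (hQpos v).le _) (hf0 v),
            ← Real.rpow_mul (hQpos v).le, hQexp]
      _ ≤ Q v * (f v * M ^ (1 / (α - 1))) :=
          mul_le_mul_of_nonneg_left hfq (hQpos v).le
      _ = M ^ (1 / (α - 1)) * (Q v * f v) := by ring
  -- assemble
  have key : ∑ v, P v * f v ≤ S ^ (1 / α) * (M ^ (1 / (α - 1)) * T) ^ (1 / q) := by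
    calc ∑ v, P v * f v = ∑ v, F v * G v := Finset.sum_congr rfl fun v _ => hFG v
      _ ≤ (∑ v, F v ^ α) ^ (1 / α) * (∑ v, G v ^ q) ^ (1 / q) := holder
      _ ≤ S ^ (1 / α) * (M ^ (1 / (α - 1)) * T) ^ (1 / q) := by
          rw [hFsum]
          refine mul_le_mul_of_nonneg_left ?_ (Real.rpow_nonneg hSnn _)
          exact Real.rpow_le_rpow
            (Finset.sum_nonneg fun v _ => Real.rpow_nonneg (hGnn v) _) hGsum
            (by positivity)
  refine key.trans_eq ?_
  rw [expRenyi, ← hS, Real.mul_rpow (Real.rpow_nonneg hSnn _) hTnn,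
    Real.mul_rpow (Real.rpow_nonneg hM.le _) hTnn,
    ← Real.rpow_mul hSnn, ← Real.rpow_mul hM.le, h1q]
  have e1 : 1 / (α - 1) * ((α - 1) / α) = 1 / α := by field_simp
  rw [e1]
  ring
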